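/- Assume w is quasi-definite and that w(u)·w(v) = w(v)·w(u) for all u, v ∈ 𝕋. Then the moments pairwise commute: μ̂(i)·μ̂(j) = μ̂(j)·μ̂(i) for all i, j ∈ ℤ. Moreover, the family of all matrices {P^L_{1,n}(z₁), P^R_{1,n}(z₂), P̃^L_{2,n}(z₃), P̃^R_{2,n}(z₄) : n ≥ 0, z₁, z₂, z₃, z₄ ∈ ℂ} is pairwise commuting, and the family {α^L_{1,n}, α^R_{1,n}, (α^L_{2,n})†, (α^R_{2,n})†, H^L_n, H^R_n : n ≥ 0} is pairwise commuting. -/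

import Mathlib

open Complex Matrix

noncomputable section

/-- Normalized matrix-valued integral over the unit circle:
`∮ f(ζ) dm(ζ) := (2π)⁻¹ ∫₀^{2π} f(e^{iθ}) dθ`, taken entrywise. -/
def circInt (N : ℕ) (f : ℂ → Matrix (Fin N) (Fin N) ℂ) : Matrix (Fin N) (Fin N) ℂ :=
  Matrix.of fun i j =>
    (2 * Real.pi)⁻¹ • ∫ θ in (0:ℝ)..(2 * Real.pi), f (Complex.exp (θ * Complex.I)) i j

/-- Evaluation at `z` of the matrix polynomial with coefficients `c 0, …, c n`. -/
def mPolyEval {N : ℕ} (c : ℕ → Matrix (Fin N) (Fin N) ℂ) (n : ℕ) (z : ℂ) :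
    Matrix (Fin N) (Fin N) ℂ :=
  ∑ k ∈ Finset.range (n + 1), z ^ k • c k

/-- Evaluation at `z` of the reciprocal polynomial `P̃(z) = ∑_{k=0}^n (c (n-k))ᴴ z^k`. -/
def mRecipEval {N : ℕ} (c : ℕ → Matrix (Fin N) (Fin N) ℂ) (n : ℕ) (z : ℂ) :
    Matrix (Fin N) (Fin N) ℂ :=
  ∑ k ∈ Finset.range (n + 1), z ^ k • (c (n - k))ᴴ

/-- The `j`-th moment `μ̂ j = ∮ w(ζ) ζ^{-j} dm(ζ)` of the matrix weight `w`. -/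
def mMoment (N : ℕ) (w : ℂ → Matrix (Fin N) (Fin N) ℂ) (j : ℤ) : Matrix (Fin N) (Fin N) ℂ :=
  circInt N fun ζ => ζ ^ (-j) • w ζ

/-- Quasi-definiteness: all the truncated block Toeplitz moment matrices
`M^L_[n]` and `M^R_[n]` are invertible. -/
def QuasiDef (N : ℕ) (w : ℂ → Matrix (Fin N) (Fin N) ℂ) : Prop :=
  ∀ n : ℕ, 1 ≤ n →
    IsUnit (Matrix.of fun p q : Fin n × Fin N =>
      mMoment N w ((p.1 : ℤ) - (q.1 : ℤ)) p.2 q.2) ∧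
    IsUnit (Matrix.of fun p q : Fin n × Fin N =>
      mMoment N w ((q.1 : ℤ) - (p.1 : ℤ)) p.2 q.2)

/-- `P n` lists the coefficients of the monic degree-`n` Szegő polynomial `P^L_{1,n}`:
monicity together with `∮ P^L_{1,n}(ζ) w(ζ) ζ^{-j} dm(ζ) = 0` for `j = 0,…,n-1`. -/
def IsSzPL1 (N : ℕ) (w : ℂ → Matrix (Fin N) (Fin N) ℂ)
    (P : ℕ → ℕ → Matrix (Fin N) (Fin N) ℂ) : Prop :=
  ∀ n : ℕ, P n n = 1 ∧ (∀ k, n < k → P n k = 0) ∧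
    ∀ j < n, circInt N (fun ζ => ζ ^ (-(j : ℤ)) • (mPolyEval (P n) n ζ * w ζ)) = 0

/-- `P n` lists the coefficients of the monic degree-`n` Szegő polynomial `P^R_{1,n}`:
monicity together with `∮ ζ^{-j} w(ζ) P^R_{1,n}(ζ) dm(ζ) = 0` for `j = 0,…,n-1`. -/
def IsSzPR1 (N : ℕ) (w : ℂ → Matrix (Fin N) (Fin N) ℂ)
    (P : ℕ → ℕ → Matrix (Fin N) (Fin N) ℂ) : Prop :=
  ∀ n : ℕ, P n n = 1 ∧ (∀ k, n < k → P n k = 0) ∧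
    ∀ j < n, circInt N (fun ζ => ζ ^ (-(j : ℤ)) • (w ζ * mPolyEval (P n) n ζ)) = 0

/-- `P n` lists the coefficients of the monic degree-`n` Szegő polynomial `P^L_{2,n}`:
monicity together with `∮ ζ^{j} w(ζ) (P^L_{2,n}(ζ))† dm(ζ) = 0` for `j = 0,…,n-1`. -/
def IsSzPL2 (N : ℕ) (w : ℂ → Matrix (Fin N) (Fin N) ℂ)
    (P : ℕ → ℕ → Matrix (Fin N) (Fin N) ℂ) : Prop :=
  ∀ n : ℕ, P n n = 1 ∧ (∀ k, n < k → P n k = 0) ∧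
    ∀ j < n, circInt N (fun ζ => ζ ^ j • (w ζ * (mPolyEval (P n) n ζ)ᴴ)) = 0

/-- `P n` lists the coefficients of the monic degree-`n` Szegő polynomial `P^R_{2,n}`:
monicity together with `∮ (P^R_{2,n}(ζ))† w(ζ) ζ^{j} dm(ζ) = 0` for `j = 0,…,n-1`. -/
def IsSzPR2 (N : ℕ) (w : ℂ → Matrix (Fin N) (Fin N) ℂ)
    (P : ℕ → ℕ → Matrix (Fin N) (Fin N) ℂ) : Prop :=
  ∀ n : ℕ, P n n = 1 ∧ (∀ k, n < k → P n k = 0) ∧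
    ∀ j < n, circInt N (fun ζ => ζ ^ j • ((mPolyEval (P n) n ζ)ᴴ * w ζ)) = 0

/-- The Verblunsky matrix of the family `P`: the value at `0` of its `n`-th member. -/
def szVer {N : ℕ} (P : ℕ → ℕ → Matrix (Fin N) (Fin N) ℂ) (n : ℕ) :
    Matrix (Fin N) (Fin N) ℂ :=
  mPolyEval (P n) n 0

/-- Quasi-tau matrix `H^L_n = ∮ P^L_{1,n}(ζ) w(ζ) ζ^{-n} dm(ζ)` (from the family `P^L_{1,·}`). -/
def szHL (N : ℕ) (w : ℂ → Matrix (Fin N) (Fin N) ℂ)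
    (P : ℕ → ℕ → Matrix (Fin N) (Fin N) ℂ) (n : ℕ) : Matrix (Fin N) (Fin N) ℂ :=
  circInt N fun ζ => ζ ^ (-(n : ℤ)) • (mPolyEval (P n) n ζ * w ζ)

/-- Quasi-tau matrix `H^R_n = ∮ ζ^{-n} w(ζ) P^R_{1,n}(ζ) dm(ζ)` (from the family `P^R_{1,·}`). -/
def szHR (N : ℕ) (w : ℂ → Matrix (Fin N) (Fin N) ℂ)
    (P : ℕ → ℕ → Matrix (Fin N) (Fin N) ℂ) (n : ℕ) : Matrix (Fin N) (Fin N) ℂ :=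
  circInt N fun ζ => ζ ^ (-(n : ℤ)) • (w ζ * mPolyEval (P n) n ζ)

/-- Cauchy transform `Q^L_{1,n}(z) = ∮ ζ^{-n} P^L_{1,n}(ζ) w(ζ) (1-ζ^{-1}z)^{-1} dm(ζ)`. -/
def szQL1 (N : ℕ) (w : ℂ → Matrix (Fin N) (Fin N) ℂ)
    (P : ℕ → ℕ → Matrix (Fin N) (Fin N) ℂ) (n : ℕ) (z : ℂ) : Matrix (Fin N) (Fin N) ℂ :=
  circInt N fun ζ => (ζ ^ (-(n : ℤ)) * (1 - ζ⁻¹ * z)⁻¹) • (mPolyEval (P n) n ζ * w ζ)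

/-- Cauchy transform `Q^R_{2,n}(z) = ∮ ζ^{-(n+1)} P̃^R_{2,n}(ζ) w(ζ) (1-ζ^{-1}z)^{-1} dm(ζ)`. -/
def szQR2 (N : ℕ) (w : ℂ → Matrix (Fin N) (Fin N) ℂ)
    (P : ℕ → ℕ → Matrix (Fin N) (Fin N) ℂ) (n : ℕ) (z : ℂ) : Matrix (Fin N) (Fin N) ℂ :=
  circInt N fun ζ => (ζ ^ (-((n : ℤ) + 1)) * (1 - ζ⁻¹ * z)⁻¹) • (mRecipEval (P n) n ζ * w ζ)

abbrev ceθ (θ : ℝ) : ℂ := Complex.exp (θ * Complex.I)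

def CircCont {N : ℕ} (f : ℂ → Matrix (Fin N) (Fin N) ℂ) : Prop :=
  ∀ i j, Continuous fun θ : ℝ => f (ceθ θ) i j

lemma circCont_integrable {N : ℕ} {f : ℂ → Matrix (Fin N) (Fin N) ℂ} (hf : CircCont f)
    (i j : Fin N) : IntervalIntegrable (fun θ : ℝ => f (ceθ θ) i j)
      MeasureTheory.volume 0 (2 * Real.pi) := (hf i j).intervalIntegrable _ _

lemma circInt_congr {N : ℕ} {f g : ℂ → Matrix (Fin N) (Fin N) ℂ}
    (h : ∀ θ : ℝ, f (ceθ θ) = g (ceθ θ)) : circInt N f = circInt N g := by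
  unfold circInt; ext i j; simp only [Matrix.of_apply]
  congr 1; apply intervalIntegral.integral_congr
  intro θ _
  show f (ceθ θ) i j = g (ceθ θ) i j
  rw [h θ]

lemma circInt_sum {N : ℕ} {ι : Type*} (s : Finset ι) (f : ι → ℂ → Matrix (Fin N) (Fin N) ℂ)
    (hf : ∀ k ∈ s, CircCont (f k)) :
    circInt N (fun ζ => ∑ k ∈ s, f k ζ) = ∑ k ∈ s, circInt N (f k) := by
  unfold circInt; ext i j
  simp only [Matrix.of_apply, Matrix.sum_apply]
  rw [← Finset.smul_sum, ← intervalIntegral.integral_finset_sum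
    (fun k hk => circCont_integrable (hf k hk) i j)]

lemma circInt_const_mul {N : ℕ} (C : Matrix (Fin N) (Fin N) ℂ)
    {f : ℂ → Matrix (Fin N) (Fin N) ℂ} (hf : CircCont f) :
    circInt N (fun ζ => C * f ζ) = C * circInt N f := by
  unfold circInt; ext i j
  simp only [Matrix.of_apply, Matrix.mul_apply]
  have h1 : ∀ l : Fin N, C i l * ((2 * Real.pi)⁻¹ • ∫ θ in (0:ℝ)..(2 * Real.pi),
      f (ceθ θ) l j) = (2 * Real.pi)⁻¹ • ∫ θ in (0:ℝ)..(2 * Real.pi),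
        C i l * f (ceθ θ) l j := fun l => by
    rw [intervalIntegral.integral_const_mul, mul_smul_comm]
  rw [Finset.sum_congr rfl (fun l _ => h1 l), ← Finset.smul_sum,
    ← intervalIntegral.integral_finset_sum (f := fun l θ => C i l * f (ceθ θ) l j)
      (fun l _ => ((continuous_const.mul (hf l j)).intervalIntegrable _ _))]

lemma circInt_mul_const {N : ℕ} (C : Matrix (Fin N) (Fin N) ℂ)
    {f : ℂ → Matrix (Fin N) (Fin N) ℂ} (hf : CircCont f) :
    circInt N (fun ζ => f ζ * C) = circInt N f * C := by
  unfold circInt; ext i j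
  simp only [Matrix.of_apply, Matrix.mul_apply]
  have h1 : ∀ l : Fin N, ((2 * Real.pi)⁻¹ • ∫ θ in (0:ℝ)..(2 * Real.pi),
      f (ceθ θ) i l) * C l j = (2 * Real.pi)⁻¹ • ∫ θ in (0:ℝ)..(2 * Real.pi),
        f (ceθ θ) i l * C l j := fun l => by
    rw [intervalIntegral.integral_mul_const, smul_mul_assoc]
  rw [Finset.sum_congr rfl (fun l _ => h1 l), ← Finset.smul_sum,
    ← intervalIntegral.integral_finset_sum (f := fun l θ => f (ceθ θ) i l * C l j)
      (fun l _ => (((hf i l).mul continuous_const).intervalIntegrable _ _))]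

lemma circInt_mul_comm {N : ℕ} {f g : ℂ → Matrix (Fin N) (Fin N) ℂ}
    (hf : CircCont f) (hg : CircCont g)
    (h : ∀ x y : ℝ, f (ceθ x) * g (ceθ y) = g (ceθ y) * f (ceθ x)) :
    circInt N f * circInt N g = circInt N g * circInt N f := by
  have e1 : circInt N f * circInt N g
      = circInt N (fun ζ => circInt N (fun ζ' => f ζ' * g ζ)) := by
    calc circInt N f * circInt N g
        = circInt N (fun ζ => circInt N f * g ζ) := (circInt_const_mul _ hg).symm
      _ = circInt N (fun ζ => circInt N (fun ζ' => f ζ' * g ζ)) := by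
          refine congrArg (circInt N) (funext fun ζ => ?_); exact (circInt_mul_const (g ζ) hf).symm
  have e2 : circInt N g * circInt N f
      = circInt N (fun ζ => circInt N (fun ζ' => g ζ * f ζ')) := by
    calc circInt N g * circInt N f
        = circInt N (fun ζ => g ζ * circInt N f) := (circInt_mul_const _ hg).symm
      _ = circInt N (fun ζ => circInt N (fun ζ' => g ζ * f ζ')) := by
          refine congrArg (circInt N) (funext fun ζ => ?_); exact (circInt_const_mul (g ζ) hf).symm
  rw [e1, e2]
  apply circInt_congr; intro x
  apply circInt_congr; intro y
  exact h y x

lemma ceθ_cont : Continuous ceθ :=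
  (Complex.continuous_ofReal.mul continuous_const).cexp

lemma ceθ_ne (θ : ℝ) : ceθ θ ≠ 0 := Complex.exp_ne_zero _

lemma ceθ_abs (θ : ℝ) : ‖ceθ θ‖ = 1 := by
  rw [show ceθ θ = Complex.exp (θ * Complex.I) from rfl, Complex.norm_exp]; simp

lemma ceθ_zpow_cont (m : ℤ) : Continuous fun θ : ℝ => (ceθ θ) ^ m :=
  Continuous.zpow₀ ceθ_cont m (fun x => Or.inl (ceθ_ne x))

lemma entry_cont {N : ℕ} {w : ℂ → Matrix (Fin N) (Fin N) ℂ} (hw : Continuous w)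
    (i j : Fin N) : Continuous fun θ : ℝ => w (ceθ θ) i j :=
  (continuous_apply j).comp ((continuous_apply i).comp (hw.comp ceθ_cont))

lemma circCont_zpow_smul {N : ℕ} {w : ℂ → Matrix (Fin N) (Fin N) ℂ} (hw : Continuous w)
    (m : ℤ) : CircCont (fun ζ => ζ ^ m • w ζ) := by
  intro i j
  simp only [Matrix.smul_apply, smul_eq_mul]
  exact (ceθ_zpow_cont m).mul (entry_cont hw i j)

lemma mMoment_comm (N : ℕ) (w : ℂ → Matrix (Fin N) (Fin N) ℂ) (hw : Continuous w)
    (hcomm : ∀ u v : ℂ, ‖u‖ = 1 → ‖v‖ = 1 → w u * w v = w v * w u)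
    (i j : ℤ) : mMoment N w i * mMoment N w j = mMoment N w j * mMoment N w i := by
  apply circInt_mul_comm (circCont_zpow_smul hw _) (circCont_zpow_smul hw _)
  intro x y
  simp only [Matrix.smul_mul, Matrix.mul_smul, smul_smul]
  rw [mul_comm, hcomm (ceθ x) (ceθ y) (ceθ_abs x) (ceθ_abs y)]

lemma circCont_const_mul {N : ℕ} (C : Matrix (Fin N) (Fin N) ℂ)
    {f : ℂ → Matrix (Fin N) (Fin N) ℂ} (hf : CircCont f) :
    CircCont (fun ζ => C * f ζ) := by
  intro i j
  simp only [Matrix.mul_apply]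
  exact continuous_finset_sum _ fun l _ => continuous_const.mul (hf l j)

lemma circCont_mul_const {N : ℕ} (C : Matrix (Fin N) (Fin N) ℂ)
    {f : ℂ → Matrix (Fin N) (Fin N) ℂ} (hf : CircCont f) :
    CircCont (fun ζ => f ζ * C) := by
  intro i j
  simp only [Matrix.mul_apply]
  exact continuous_finset_sum _ fun l _ => (hf i l).mul continuous_const

lemma zpow_circ (θ : ℝ) (m : ℤ) (k : ℕ) :
    (ceθ θ) ^ m * (ceθ θ) ^ (k : ℕ) = (ceθ θ) ^ (m + (k:ℤ)) := by
  rw [← zpow_natCast, ← zpow_add₀ (ceθ_ne θ)]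

lemma conj_circ_pow (θ : ℝ) (k : ℕ) :
    (starRingEnd ℂ) ((ceθ θ) ^ (k : ℕ)) = (ceθ θ) ^ (-(k:ℤ)) := by
  rw [map_pow, ← Complex.exp_conj]
  have : (starRingEnd ℂ) ((θ:ℂ) * Complex.I) = -((θ:ℂ) * Complex.I) := by
    simp [Complex.conj_ofReal]
  rw [this, _root_.zpow_neg, zpow_natCast, ← inv_pow, ← Complex.exp_neg]

lemma expandL1 {N : ℕ} {w : ℂ → Matrix (Fin N) (Fin N) ℂ} (hw : Continuous w)
    (c : ℕ → Matrix (Fin N) (Fin N) ℂ) (n : ℕ) (m : ℤ) :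
    circInt N (fun ζ => ζ ^ m • (mPolyEval c n ζ * w ζ))
      = ∑ k ∈ Finset.range (n + 1), c k * mMoment N w (-(m + k)) := by
  have h1 : circInt N (fun ζ => ζ ^ m • (mPolyEval c n ζ * w ζ))
      = circInt N (fun ζ => ∑ k ∈ Finset.range (n + 1),
          c k * (ζ ^ (m + (k:ℤ)) • w ζ)) := by
    apply circInt_congr
    intro θ
    simp only [mPolyEval, Matrix.sum_mul, Finset.smul_sum, Matrix.smul_mul,
      mul_smul_comm, smul_smul]
    exact Finset.sum_congr rfl fun k _ => by rw [zpow_circ]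
  rw [h1, circInt_sum _ _ (fun k _ => circCont_const_mul _ (circCont_zpow_smul hw _))]
  refine Finset.sum_congr rfl fun k _ => ?_
  rw [circInt_const_mul _ (circCont_zpow_smul hw _)]
  congr 1
  rw [mMoment, neg_neg]

lemma expandR1 {N : ℕ} {w : ℂ → Matrix (Fin N) (Fin N) ℂ} (hw : Continuous w)
    (c : ℕ → Matrix (Fin N) (Fin N) ℂ) (n : ℕ) (m : ℤ) :
    circInt N (fun ζ => ζ ^ m • (w ζ * mPolyEval c n ζ))
      = ∑ k ∈ Finset.range (n + 1), mMoment N w (-(m + k)) * c k := by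
  have h1 : circInt N (fun ζ => ζ ^ m • (w ζ * mPolyEval c n ζ))
      = circInt N (fun ζ => ∑ k ∈ Finset.range (n + 1),
          (ζ ^ (m + (k:ℤ)) • w ζ) * c k) := by
    apply circInt_congr
    intro θ
    simp only [mPolyEval, Matrix.mul_sum, Finset.smul_sum, Matrix.smul_mul,
      Matrix.mul_smul, smul_smul]
    exact Finset.sum_congr rfl fun k _ => by rw [zpow_circ]
  rw [h1, circInt_sum _ _ (fun k _ => circCont_mul_const _ (circCont_zpow_smul hw _))]
  refine Finset.sum_congr rfl fun k _ => ?_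
  rw [circInt_mul_const _ (circCont_zpow_smul hw _)]
  congr 1
  rw [mMoment, neg_neg]

lemma polyEval_conjT (c : ℕ → Matrix (Fin N) (Fin N) ℂ) (n : ℕ) (θ : ℝ) :
    (mPolyEval c n (ceθ θ))ᴴ
      = ∑ k ∈ Finset.range (n + 1), (ceθ θ) ^ (-(k:ℤ)) • (c k)ᴴ := by
  simp only [mPolyEval, Matrix.conjTranspose_sum, Matrix.conjTranspose_smul]
  exact Finset.sum_congr rfl fun k _ => by rw [RCLike.star_def, conj_circ_pow]

lemma expandL2 {N : ℕ} {w : ℂ → Matrix (Fin N) (Fin N) ℂ} (hw : Continuous w)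
    (c : ℕ → Matrix (Fin N) (Fin N) ℂ) (n : ℕ) (m : ℤ) :
    circInt N (fun ζ => ζ ^ m • (w ζ * (mPolyEval c n ζ)ᴴ))
      = ∑ k ∈ Finset.range (n + 1), mMoment N w ((k:ℤ) - m) * (c k)ᴴ := by
  have h1 : circInt N (fun ζ => ζ ^ m • (w ζ * (mPolyEval c n ζ)ᴴ))
      = circInt N (fun ζ => ∑ k ∈ Finset.range (n + 1),
          (ζ ^ (-((k:ℤ) - m)) • w ζ) * (c k)ᴴ) := by
    apply circInt_congr
    intro θ
    rw [polyEval_conjT]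
    simp only [Matrix.mul_sum, Finset.smul_sum, Matrix.smul_mul,
      Matrix.mul_smul, smul_smul]
    refine Finset.sum_congr rfl fun k _ => ?_
    have he : (-((k:ℤ) - m)) = m + -(k:ℤ) := by ring
    rw [he, ← zpow_add₀ (ceθ_ne θ)]
  rw [h1, circInt_sum _ _ (fun k _ => circCont_mul_const _ (circCont_zpow_smul hw _))]
  refine Finset.sum_congr rfl fun k _ => ?_
  rw [circInt_mul_const _ (circCont_zpow_smul hw _)]
  rfl

lemma expandR2 {N : ℕ} {w : ℂ → Matrix (Fin N) (Fin N) ℂ} (hw : Continuous w)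
    (c : ℕ → Matrix (Fin N) (Fin N) ℂ) (n : ℕ) (m : ℤ) :
    circInt N (fun ζ => ζ ^ m • ((mPolyEval c n ζ)ᴴ * w ζ))
      = ∑ k ∈ Finset.range (n + 1), (c k)ᴴ * mMoment N w ((k:ℤ) - m) := by
  have h1 : circInt N (fun ζ => ζ ^ m • ((mPolyEval c n ζ)ᴴ * w ζ))
      = circInt N (fun ζ => ∑ k ∈ Finset.range (n + 1),
          (c k)ᴴ * (ζ ^ (-((k:ℤ) - m)) • w ζ)) := by
    apply circInt_congr
    intro θ
    rw [polyEval_conjT]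
    simp only [Matrix.sum_mul, Finset.smul_sum, Matrix.smul_mul,
      mul_smul_comm, smul_smul]
    refine Finset.sum_congr rfl fun k _ => ?_
    have he : (-((k:ℤ) - m)) = m + -(k:ℤ) := by ring
    rw [he, ← zpow_add₀ (ceθ_ne θ)]
  rw [h1, circInt_sum _ _ (fun k _ => circCont_const_mul _ (circCont_zpow_smul hw _))]
  refine Finset.sum_congr rfl fun k _ => ?_
  rw [circInt_const_mul _ (circCont_zpow_smul hw _)]
  rfl

variable {N n : ℕ}

def Dmat (n N : ℕ) (t : Matrix (Fin N) (Fin N) ℂ) :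
    Matrix (Fin n × Fin N) (Fin n × Fin N) ℂ :=
  Matrix.of fun p q => if p.1 = q.1 then t p.2 q.2 else 0

def Rof (n N : ℕ) (v : Fin n → Matrix (Fin N) (Fin N) ℂ) :
    Matrix (Fin N) (Fin n × Fin N) ℂ :=
  Matrix.of fun a q => v q.1 a q.2

def Cof (n N : ℕ) (v : Fin n → Matrix (Fin N) (Fin N) ℂ) :
    Matrix (Fin n × Fin N) (Fin N) ℂ :=
  Matrix.of fun q b => v q.1 q.2 b

def Mof (n N : ℕ) (μ : Fin n → Fin n → Matrix (Fin N) (Fin N) ℂ) :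
    Matrix (Fin n × Fin N) (Fin n × Fin N) ℂ :=
  Matrix.of fun p q => μ p.1 q.1 p.2 q.2

lemma Mof_D_comm (μ : Fin n → Fin n → Matrix (Fin N) (Fin N) ℂ)
    (t : Matrix (Fin N) (Fin N) ℂ) (ht : ∀ p q, μ p q * t = t * μ p q) :
    Mof n N μ * Dmat n N t = Dmat n N t * Mof n N μ := by
  ext ⟨k, a⟩ ⟨j, b⟩
  simp only [Matrix.mul_apply, Mof, Dmat, Matrix.of_apply, Fintype.sum_prod_type,
    mul_ite, mul_zero, ite_mul, zero_mul]
  rw [Finset.sum_comm]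
  simp only [Finset.sum_ite_eq, Finset.sum_ite_eq', Finset.mem_univ, if_true]
  have := congrArg (fun M => M a b) (ht k j)
  simpa [Matrix.mul_apply] using this

lemma Rof_D_comm (v : Fin n → Matrix (Fin N) (Fin N) ℂ)
    (t : Matrix (Fin N) (Fin N) ℂ) :
    Rof n N v * Dmat n N t = t * Rof n N v ↔ ∀ j, v j * t = t * v j := by
  constructor
  · intro h j
    ext a b
    have := congrArg (fun M => M a (j, b)) h
    simp only [Matrix.mul_apply, Rof, Dmat, Matrix.of_apply, Fintype.sum_prod_type,
      mul_ite, mul_zero, Finset.sum_ite_eq, Finset.mem_univ, if_true] at this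
    simpa [Matrix.mul_apply] using this
  · intro h
    ext a ⟨j, b⟩
    simp only [Matrix.mul_apply, Rof, Dmat, Matrix.of_apply, Fintype.sum_prod_type,
      mul_ite, mul_zero, Finset.sum_ite_eq, Finset.mem_univ, if_true]
    have := congrArg (fun M => M a b) (h j)
    simpa [Matrix.mul_apply] using this

lemma Cof_D_comm (v : Fin n → Matrix (Fin N) (Fin N) ℂ)
    (t : Matrix (Fin N) (Fin N) ℂ) :
    Dmat n N t * Cof n N v = Cof n N v * t ↔ ∀ j, t * v j = v j * t := by
  constructor
  · intro h j
    ext a b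
    have := congrArg (fun M => M (j, a) b) h
    simp only [Matrix.mul_apply, Cof, Dmat, Matrix.of_apply, Fintype.sum_prod_type,
      ite_mul, zero_mul, Finset.sum_ite_eq, Finset.mem_univ, if_true] at this
    simpa [Matrix.mul_apply] using this
  · intro h
    ext ⟨j, a⟩ b
    simp only [Matrix.mul_apply, Cof, Dmat, Matrix.of_apply, Fintype.sum_prod_type,
      ite_mul, zero_mul, Finset.sum_ite_eq, Finset.mem_univ, if_true]
    have := congrArg (fun M => M a b) (h j)
    simpa [Matrix.mul_apply] using this

lemma Rof_mul_Mof (v : Fin n → Matrix (Fin N) (Fin N) ℂ)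
    (μ : Fin n → Fin n → Matrix (Fin N) (Fin N) ℂ) :
    Rof n N v * Mof n N μ = Rof n N (fun j => ∑ k : Fin n, v k * μ k j) := by
  ext a ⟨j, b⟩
  simp only [Matrix.mul_apply, Rof, Mof, Matrix.of_apply, Fintype.sum_prod_type,
    Matrix.sum_apply]

lemma Mof_mul_Cof (v : Fin n → Matrix (Fin N) (Fin N) ℂ)
    (μ : Fin n → Fin n → Matrix (Fin N) (Fin N) ℂ) :
    Mof n N μ * Cof n N v = Cof n N (fun j => ∑ k : Fin n, μ j k * v k) := by
  ext ⟨j, a⟩ b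
  simp only [Matrix.mul_apply, Cof, Mof, Matrix.of_apply, Fintype.sum_prod_type,
    Matrix.sum_apply]

lemma inv_D_comm {M D : Matrix (Fin n × Fin N) (Fin n × Fin N) ℂ}
    (hM : IsUnit M) (h : M * D = D * M) : M⁻¹ * D = D * M⁻¹ := by
  have hd : IsUnit M.det := (Matrix.isUnit_iff_isUnit_det M).mp hM
  calc M⁻¹ * D = M⁻¹ * (D * (M * M⁻¹)) := by
        rw [Matrix.mul_nonsing_inv _ hd, Matrix.mul_one]
    _ = M⁻¹ * (D * M * M⁻¹) := by rw [Matrix.mul_assoc D M]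
    _ = M⁻¹ * (M * D * M⁻¹) := by rw [h]
    _ = M⁻¹ * M * (D * M⁻¹) := by rw [Matrix.mul_assoc M D, ← Matrix.mul_assoc]
    _ = D * M⁻¹ := by rw [Matrix.nonsing_inv_mul _ hd, Matrix.one_mul]

lemma row_solve {M : Matrix (Fin n × Fin N) (Fin n × Fin N) ℂ} (hM : IsUnit M)
    {V R : Matrix (Fin N) (Fin n × Fin N) ℂ} (hVM : V * M = R)
    {D : Matrix (Fin n × Fin N) (Fin n × Fin N) ℂ} {t : Matrix (Fin N) (Fin N) ℂ}
    (hMD : M * D = D * M) (hRD : R * D = t * R) : V * D = t * V := by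
  have hd : IsUnit M.det := (Matrix.isUnit_iff_isUnit_det M).mp hM
  have hV : V = R * M⁻¹ := by
    rw [← hVM, Matrix.mul_assoc, Matrix.mul_nonsing_inv _ hd, Matrix.mul_one]
  rw [hV, Matrix.mul_assoc, inv_D_comm hM hMD, ← Matrix.mul_assoc, hRD, Matrix.mul_assoc]

lemma col_solve {M : Matrix (Fin n × Fin N) (Fin n × Fin N) ℂ} (hM : IsUnit M)
    {W R : Matrix (Fin n × Fin N) (Fin N) ℂ} (hMW : M * W = R)
    {D : Matrix (Fin n × Fin N) (Fin n × Fin N) ℂ} {t : Matrix (Fin N) (Fin N) ℂ}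
    (hMD : M * D = D * M) (hRD : D * R = R * t) : D * W = W * t := by
  have hd : IsUnit M.det := (Matrix.isUnit_iff_isUnit_det M).mp hM
  have hW : W = M⁻¹ * R := by
    rw [← hMW, ← Matrix.mul_assoc, Matrix.nonsing_inv_mul _ hd, Matrix.one_mul]
  rw [hW, ← Matrix.mul_assoc, ← inv_D_comm hM hMD, Matrix.mul_assoc, hRD, ← Matrix.mul_assoc]

def GoodM (N : ℕ) (w : ℂ → Matrix (Fin N) (Fin N) ℂ) (X : Matrix (Fin N) (Fin N) ℂ) : Prop :=
  ∀ t : Matrix (Fin N) (Fin N) ℂ,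
    (∀ j : ℤ, t * mMoment N w j = mMoment N w j * t) → X * t = t * X

section Good

variable {N : ℕ} {w : ℂ → Matrix (Fin N) (Fin N) ℂ}

lemma good_moment (j : ℤ) : GoodM N w (mMoment N w j) := fun _ ht => (ht j).symm

lemma good_one : GoodM N w 1 := fun t _ => by rw [Matrix.one_mul, Matrix.mul_one]

lemma good_zero : GoodM N w 0 := fun t _ => by rw [Matrix.zero_mul, Matrix.mul_zero]

lemma good_neg {X} (h : GoodM N w X) : GoodM N w (-X) := fun t ht => by
  rw [Matrix.neg_mul, h t ht, Matrix.mul_neg]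

lemma good_add {X Y} (hX : GoodM N w X) (hY : GoodM N w Y) : GoodM N w (X + Y) :=
  fun t ht => by rw [Matrix.add_mul, Matrix.mul_add, hX t ht, hY t ht]

lemma good_mul {X Y} (hX : GoodM N w X) (hY : GoodM N w Y) : GoodM N w (X * Y) :=
  fun t ht => by rw [Matrix.mul_assoc, hY t ht, ← Matrix.mul_assoc, hX t ht,
    Matrix.mul_assoc]

lemma good_smul {X} (z : ℂ) (h : GoodM N w X) : GoodM N w (z • X) := fun t ht => by
  rw [Matrix.smul_mul, h t ht, Matrix.mul_smul]

lemma good_sum {ι : Type*} (s : Finset ι) (f : ι → Matrix (Fin N) (Fin N) ℂ)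
    (h : ∀ k ∈ s, GoodM N w (f k)) : GoodM N w (∑ k ∈ s, f k) := fun t ht => by
  rw [Matrix.sum_mul, Matrix.mul_sum]
  exact Finset.sum_congr rfl fun k hk => h k hk t ht

lemma good_pair (hw : Continuous w)
    (hcomm : ∀ u v : ℂ, ‖u‖ = 1 → ‖v‖ = 1 → w u * w v = w v * w u)
    {X Y} (hX : GoodM N w X) (hY : GoodM N w Y) : X * Y = Y * X := by
  apply hX
  intro j
  apply hY
  intro j'
  exact mMoment_comm N w hw hcomm j j'

lemma solve_row {n : ℕ} (s : Fin n → Fin n → ℤ)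
    (hM : IsUnit (Mof n N (fun p q => mMoment N w (s p q))))
    (v r : Fin n → Matrix (Fin N) (Fin N) ℂ)
    (hr : ∀ j, GoodM N w (r j))
    (heq : ∀ j : Fin n, ∑ k : Fin n, v k * mMoment N w (s k j) = r j) :
    ∀ k : Fin n, GoodM N w (v k) := by
  intro k t ht
  have hMD : Mof n N (fun p q => mMoment N w (s p q)) * Dmat n N t
      = Dmat n N t * Mof n N (fun p q => mMoment N w (s p q)) :=
    Mof_D_comm _ t (fun p q => (ht (s p q)).symm)
  have hVM : Rof n N v * Mof n N (fun p q => mMoment N w (s p q)) = Rof n N r := by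
    rw [Rof_mul_Mof]
    exact congrArg (Rof n N) (funext heq)
  have hRD : Rof n N r * Dmat n N t = t * Rof n N r :=
    (Rof_D_comm r t).mpr (fun j => hr j t ht)
  exact (Rof_D_comm v t).mp (row_solve hM hVM hMD hRD) k

lemma solve_col {n : ℕ} (s : Fin n → Fin n → ℤ)
    (hM : IsUnit (Mof n N (fun p q => mMoment N w (s p q))))
    (v r : Fin n → Matrix (Fin N) (Fin N) ℂ)
    (hr : ∀ j, GoodM N w (r j))
    (heq : ∀ j : Fin n, ∑ k : Fin n, mMoment N w (s j k) * v k = r j) :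
    ∀ k : Fin n, GoodM N w (v k) := by
  intro k t ht
  have hMD : Mof n N (fun p q => mMoment N w (s p q)) * Dmat n N t
      = Dmat n N t * Mof n N (fun p q => mMoment N w (s p q)) :=
    Mof_D_comm _ t (fun p q => (ht (s p q)).symm)
  have hMW : Mof n N (fun p q => mMoment N w (s p q)) * Cof n N v = Cof n N r := by
    rw [Mof_mul_Cof]
    exact congrArg (Cof n N) (funext heq)
  have hRD : Dmat n N t * Cof n N r = Cof n N r * t :=
    (Cof_D_comm r t).mpr (fun j => (hr j t ht).symm)
  exact ((Cof_D_comm v t).mp (col_solve hM hMW hMD hRD) k).symm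

end Good

section Sys

variable {N : ℕ} {w : ℂ → Matrix (Fin N) (Fin N) ℂ}

lemma goodPL1 (hw : Continuous w) (hqd : QuasiDef N w)
    (P : ℕ → ℕ → Matrix (Fin N) (Fin N) ℂ) (hP : IsSzPL1 N w P) :
    ∀ n k, GoodM N w (P n k) := by
  intro n k
  rcases lt_trichotomy k n with hk | hk | hk
  case inr.inl => rw [hk, (hP n).1]; exact good_one
  case inr.inr => rw [(hP n).2.1 k hk]; exact good_zero
  have hn : 1 ≤ n := by omega
  have key : ∀ j : Fin n,
      ∑ k' : Fin n, P n k' * mMoment N w (((j:ℕ):ℤ) - ((k':ℕ):ℤ))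
        = -(mMoment N w (((j:ℕ):ℤ) - (n:ℤ))) := by
    intro j
    have h0 := (hP n).2.2 j j.2
    rw [expandL1 hw (P n) n (-(j:ℤ))] at h0
    rw [Finset.sum_range_succ, (hP n).1, Matrix.one_mul] at h0
    have h2 := eq_neg_of_add_eq_zero_left h0
    have h1 : ∑ k' : Fin n, P n k' * mMoment N w (((j:ℕ):ℤ) - ((k':ℕ):ℤ))
        = ∑ k' ∈ Finset.range n, P n k' * mMoment N w (-(-((j:ℕ):ℤ) + (k':ℤ))) := by
      rw [← Fin.sum_univ_eq_sum_range (fun k' : ℕ =>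
        P n k' * mMoment N w (-(-((j:ℕ):ℤ) + (k':ℤ)))) n]
      exact Finset.sum_congr rfl fun k' _ =>
        congrArg (fun a => P n (k':ℕ) * mMoment N w a) (by ring)
    rw [h1, h2]
    exact congrArg (fun a => -(mMoment N w a)) (by ring)
  exact solve_row (fun p q => ((q:ℕ):ℤ) - ((p:ℕ):ℤ)) ((hqd n hn).2)
    (fun k' : Fin n => P n k') _ (fun j => good_neg (good_moment _)) key ⟨k, hk⟩

end Sys

section Sys2

variable {N : ℕ} {w : ℂ → Matrix (Fin N) (Fin N) ℂ}

lemma goodPR1 (hw : Continuous w) (hqd : QuasiDef N w)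
    (P : ℕ → ℕ → Matrix (Fin N) (Fin N) ℂ) (hP : IsSzPR1 N w P) :
    ∀ n k, GoodM N w (P n k) := by
  intro n k
  rcases lt_trichotomy k n with hk | hk | hk
  case inr.inl => rw [hk, (hP n).1]; exact good_one
  case inr.inr => rw [(hP n).2.1 k hk]; exact good_zero
  have hn : 1 ≤ n := by omega
  have key : ∀ j : Fin n,
      ∑ k' : Fin n, mMoment N w (((j:ℕ):ℤ) - ((k':ℕ):ℤ)) * P n k'
        = -(mMoment N w (((j:ℕ):ℤ) - (n:ℤ))) := by
    intro j
    have h0 := (hP n).2.2 j j.2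
    rw [expandR1 hw (P n) n (-(j:ℤ))] at h0
    rw [Finset.sum_range_succ, (hP n).1, Matrix.mul_one] at h0
    have h2 := eq_neg_of_add_eq_zero_left h0
    have h1 : ∑ k' : Fin n, mMoment N w (((j:ℕ):ℤ) - ((k':ℕ):ℤ)) * P n k'
        = ∑ k' ∈ Finset.range n, mMoment N w (-(-((j:ℕ):ℤ) + (k':ℤ))) * P n k' := by
      rw [← Fin.sum_univ_eq_sum_range (fun k' : ℕ =>
        mMoment N w (-(-((j:ℕ):ℤ) + (k':ℤ))) * P n k') n]
      exact Finset.sum_congr rfl fun k' _ =>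
        congrArg (fun a => mMoment N w a * P n (k':ℕ)) (by ring)
    rw [h1, h2]
    exact congrArg (fun a => -(mMoment N w a)) (by ring)
  exact solve_col (fun p q => ((p:ℕ):ℤ) - ((q:ℕ):ℤ)) ((hqd n hn).1)
    (fun k' : Fin n => P n k') _ (fun j => good_neg (good_moment _)) key ⟨k, hk⟩

lemma goodQL2 (hw : Continuous w) (hqd : QuasiDef N w)
    (P : ℕ → ℕ → Matrix (Fin N) (Fin N) ℂ) (hP : IsSzPL2 N w P) :
    ∀ n k, GoodM N w ((P n k)ᴴ) := by
  intro n k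
  rcases lt_trichotomy k n with hk | hk | hk
  case inr.inl => rw [hk, (hP n).1, Matrix.conjTranspose_one]; exact good_one
  case inr.inr => rw [(hP n).2.1 k hk, Matrix.conjTranspose_zero]; exact good_zero
  have hn : 1 ≤ n := by omega
  have key : ∀ j : Fin n,
      ∑ k' : Fin n, mMoment N w (((k':ℕ):ℤ) - ((j:ℕ):ℤ)) * (P n k')ᴴ
        = -(mMoment N w ((n:ℤ) - ((j:ℕ):ℤ))) := by
    intro j
    have h0 := (hP n).2.2 j j.2
    have h0' : circInt N (fun ζ => ζ ^ (((j:ℕ):ℤ)) •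
        (w ζ * (mPolyEval (P n) n ζ)ᴴ)) = 0 := by
      have hcg : circInt N (fun ζ => ζ ^ (((j:ℕ):ℤ)) • (w ζ * (mPolyEval (P n) n ζ)ᴴ))
          = circInt N (fun ζ => ζ ^ ((j:ℕ):ℕ) • (w ζ * (mPolyEval (P n) n ζ)ᴴ)) :=
        circInt_congr (fun θ => by rw [zpow_natCast])
      rw [hcg]; exact h0
    rw [expandL2 hw (P n) n ((j:ℕ):ℤ)] at h0'
    rw [Finset.sum_range_succ, (hP n).1, Matrix.conjTranspose_one, Matrix.mul_one] at h0'
    have h2 := eq_neg_of_add_eq_zero_left h0'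
    have h1 : ∑ k' : Fin n, mMoment N w (((k':ℕ):ℤ) - ((j:ℕ):ℤ)) * (P n k')ᴴ
        = ∑ k' ∈ Finset.range n, mMoment N w (((k':ℕ):ℤ) - ((j:ℕ):ℤ)) * (P n k')ᴴ :=
      Fin.sum_univ_eq_sum_range (fun k' : ℕ =>
        mMoment N w (((k':ℕ):ℤ) - ((j:ℕ):ℤ)) * (P n k')ᴴ) n
    rw [h1, h2]
  exact solve_col (fun p q => ((q:ℕ):ℤ) - ((p:ℕ):ℤ)) ((hqd n hn).2)
    (fun k' : Fin n => (P n k')ᴴ) _ (fun j => good_neg (good_moment _)) key ⟨k, hk⟩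

lemma goodQR2 (hw : Continuous w) (hqd : QuasiDef N w)
    (P : ℕ → ℕ → Matrix (Fin N) (Fin N) ℂ) (hP : IsSzPR2 N w P) :
    ∀ n k, GoodM N w ((P n k)ᴴ) := by
  intro n k
  rcases lt_trichotomy k n with hk | hk | hk
  case inr.inl => rw [hk, (hP n).1, Matrix.conjTranspose_one]; exact good_one
  case inr.inr => rw [(hP n).2.1 k hk, Matrix.conjTranspose_zero]; exact good_zero
  have hn : 1 ≤ n := by omega
  have key : ∀ j : Fin n,
      ∑ k' : Fin n, (P n k')ᴴ * mMoment N w (((k':ℕ):ℤ) - ((j:ℕ):ℤ))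
        = -(mMoment N w ((n:ℤ) - ((j:ℕ):ℤ))) := by
    intro j
    have h0 := (hP n).2.2 j j.2
    have h0' : circInt N (fun ζ => ζ ^ (((j:ℕ):ℤ)) •
        ((mPolyEval (P n) n ζ)ᴴ * w ζ)) = 0 := by
      have hcg : circInt N (fun ζ => ζ ^ (((j:ℕ):ℤ)) • ((mPolyEval (P n) n ζ)ᴴ * w ζ))
          = circInt N (fun ζ => ζ ^ ((j:ℕ):ℕ) • ((mPolyEval (P n) n ζ)ᴴ * w ζ)) :=
        circInt_congr (fun θ => by rw [zpow_natCast])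
      rw [hcg]; exact h0
    rw [expandR2 hw (P n) n ((j:ℕ):ℤ)] at h0'
    rw [Finset.sum_range_succ, (hP n).1, Matrix.conjTranspose_one, Matrix.one_mul] at h0'
    have h2 := eq_neg_of_add_eq_zero_left h0'
    have h1 : ∑ k' : Fin n, (P n k')ᴴ * mMoment N w (((k':ℕ):ℤ) - ((j:ℕ):ℤ))
        = ∑ k' ∈ Finset.range n, (P n k')ᴴ * mMoment N w (((k':ℕ):ℤ) - ((j:ℕ):ℤ)) :=
      Fin.sum_univ_eq_sum_range (fun k' : ℕ =>
        (P n k')ᴴ * mMoment N w (((k':ℕ):ℤ) - ((j:ℕ):ℤ))) n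
    rw [h1, h2]
  exact solve_row (fun p q => ((p:ℕ):ℤ) - ((q:ℕ):ℤ)) ((hqd n hn).1)
    (fun k' : Fin n => (P n k')ᴴ) _ (fun j => good_neg (good_moment _)) key ⟨k, hk⟩

end Sys2

section Final

variable {N : ℕ} {w : ℂ → Matrix (Fin N) (Fin N) ℂ}

lemma good_polyEval {c : ℕ → Matrix (Fin N) (Fin N) ℂ} {n : ℕ} {z : ℂ}
    (h : ∀ k, GoodM N w (c k)) : GoodM N w (mPolyEval c n z) := by
  show GoodM N w (∑ k ∈ Finset.range (n + 1), z ^ k • c k)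
  exact good_sum _ _ fun k _ => good_smul _ (h k)

lemma good_recipEval {c : ℕ → Matrix (Fin N) (Fin N) ℂ} {n : ℕ} {z : ℂ}
    (h : ∀ k, GoodM N w ((c k)ᴴ)) : GoodM N w (mRecipEval c n z) := by
  show GoodM N w (∑ k ∈ Finset.range (n + 1), z ^ k • (c (n - k))ᴴ)
  exact good_sum _ _ fun k _ => good_smul _ (h (n - k))

lemma mPolyEval_zero (c : ℕ → Matrix (Fin N) (Fin N) ℂ) (n : ℕ) :
    mPolyEval c n 0 = c 0 := by
  rw [mPolyEval, Finset.sum_eq_single_of_mem 0 (Finset.mem_range.mpr (by omega))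
    (fun k _ hk => by rw [zero_pow hk, zero_smul]), pow_zero, one_smul]

lemma good_szHL (hw : Continuous w) {P : ℕ → ℕ → Matrix (Fin N) (Fin N) ℂ} {n : ℕ}
    (h : ∀ k, GoodM N w (P n k)) : GoodM N w (szHL N w P n) := by
  show GoodM N w (circInt N fun ζ => ζ ^ (-(n : ℤ)) • (mPolyEval (P n) n ζ * w ζ))
  rw [expandL1 hw (P n) n (-(n : ℤ))]
  exact good_sum _ _ fun k _ => good_mul (h k) (good_moment _)

lemma good_szHR (hw : Continuous w) {P : ℕ → ℕ → Matrix (Fin N) (Fin N) ℂ} {n : ℕ}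
    (h : ∀ k, GoodM N w (P n k)) : GoodM N w (szHR N w P n) := by
  show GoodM N w (circInt N fun ζ => ζ ^ (-(n : ℤ)) • (w ζ * mPolyEval (P n) n ζ))
  rw [expandR1 hw (P n) n (-(n : ℤ))]
  exact good_sum _ _ fun k _ => good_mul (good_moment _) (h k)

end Final

/-- if the values of the weight pairwise commute, then the moments,
the Szegő and reciprocal polynomials, and the Verblunsky and quasi-tau matrices all
form pairwise commuting families. -/
theorem statement5 {N : ℕ} (hN : 1 ≤ N) (w : ℂ → Matrix (Fin N) (Fin N) ℂ)
    (hw : Continuous w) (hqd : QuasiDef N w)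
    (PL1 PR1 PL2 PR2 : ℕ → ℕ → Matrix (Fin N) (Fin N) ℂ)
    (hPL1 : IsSzPL1 N w PL1) (hPR1 : IsSzPR1 N w PR1)
    (hPL2 : IsSzPL2 N w PL2) (hPR2 : IsSzPR2 N w PR2)
    (hcomm : ∀ u v : ℂ, ‖u‖ = 1 → ‖v‖ = 1 → w u * w v = w v * w u) :
    (∀ i j : ℤ, mMoment N w i * mMoment N w j = mMoment N w j * mMoment N w i) ∧
    (∀ A B : Matrix (Fin N) (Fin N) ℂ,
      (∃ n : ℕ, ∃ z : ℂ, A = mPolyEval (PL1 n) n z ∨ A = mPolyEval (PR1 n) n z ∨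
        A = mRecipEval (PL2 n) n z ∨ A = mRecipEval (PR2 n) n z) →
      (∃ n : ℕ, ∃ z : ℂ, B = mPolyEval (PL1 n) n z ∨ B = mPolyEval (PR1 n) n z ∨
        B = mRecipEval (PL2 n) n z ∨ B = mRecipEval (PR2 n) n z) →
      A * B = B * A) ∧
    (∀ A B : Matrix (Fin N) (Fin N) ℂ,
      (∃ n : ℕ, A = szVer PL1 n ∨ A = szVer PR1 n ∨ A = (szVer PL2 n)ᴴ ∨
        A = (szVer PR2 n)ᴴ ∨ A = szHL N w PL1 n ∨ A = szHR N w PR1 n) →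
      (∃ n : ℕ, B = szVer PL1 n ∨ B = szVer PR1 n ∨ B = (szVer PL2 n)ᴴ ∨
        B = (szVer PR2 n)ᴴ ∨ B = szHL N w PL1 n ∨ B = szHR N w PR1 n) →
      A * B = B * A) := by
  have gL1 := goodPL1 hw hqd PL1 hPL1
  have gR1 := goodPR1 hw hqd PR1 hPR1
  have gL2 := goodQL2 hw hqd PL2 hPL2
  have gR2 := goodQR2 hw hqd PR2 hPR2
  have goodOf2 : ∀ A : Matrix (Fin N) (Fin N) ℂ,
      (∃ n : ℕ, ∃ z : ℂ, A = mPolyEval (PL1 n) n z ∨ A = mPolyEval (PR1 n) n z ∨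
        A = mRecipEval (PL2 n) n z ∨ A = mRecipEval (PR2 n) n z) → GoodM N w A := by
    rintro A ⟨n, z, h | h | h | h⟩ <;> subst h
    · exact good_polyEval (gL1 n)
    · exact good_polyEval (gR1 n)
    · exact good_recipEval (gL2 n)
    · exact good_recipEval (gR2 n)
  have goodOf3 : ∀ A : Matrix (Fin N) (Fin N) ℂ,
      (∃ n : ℕ, A = szVer PL1 n ∨ A = szVer PR1 n ∨ A = (szVer PL2 n)ᴴ ∨
        A = (szVer PR2 n)ᴴ ∨ A = szHL N w PL1 n ∨ A = szHR N w PR1 n) → GoodM N w A := by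
    rintro A ⟨n, h | h | h | h | h | h⟩ <;> subst h
    · exact good_polyEval (gL1 n)
    · exact good_polyEval (gR1 n)
    · show GoodM N w ((mPolyEval (PL2 n) n 0)ᴴ)
      rw [mPolyEval_zero]
      exact gL2 n 0
    · show GoodM N w ((mPolyEval (PR2 n) n 0)ᴴ)
      rw [mPolyEval_zero]
      exact gR2 n 0
    · exact good_szHL hw (gL1 n)
    · exact good_szHR hw (gR1 n)
  refine ⟨mMoment_comm N w hw hcomm, ?_, ?_⟩
  · intro A B hA hB
    exact good_pair hw hcomm (goodOf2 A hA) (goodOf2 B hB)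
  · intro A B hA hB
    exact good_pair hw hcomm (goodOf3 A hA) (goodOf3 B hB)
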